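/- Assume ℓ^† < kα < h^†. Let θ̄ = −(γ+1)(ℓ^†−kα)/((γ−1)(h^†−kα) − (γ+1)(ℓ^†−kα)) and c = (−2(ℓ^†−kα)(h^†−kα)/α)/sqrt((γ²−1)(h^†−kα)(kα−ℓ^†)) · (((γ−1)/(γ+1))·((h^†−kα)/(kα−ℓ^†)))^{γ/2}. Then θ̄ ∈ (0,1), and the value-matching and smooth-pasting conditions hold at θ̄: c·ψ(θ̄) = (θ̄h^† + (1−θ̄)ℓ^†)/α − k and c·ψ'(θ̄) = (h^†−ℓ^†)/α. -/

import Mathlib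

open Real

/-- The expansion threshold `θ̄ = -(γ+1)(ℓ†-kα)/((γ-1)(h†-kα) - (γ+1)(ℓ†-kα))`
lies in `(0,1)`, and with the constant `c` of Proposition 1(ii) the value-matching
and smooth-pasting conditions hold at `θ̄`. -/
lemma core_lemma (γ A B α : ℝ) (hγ1 : 1 < γ) (hA : 0 < A) (hB : 0 < B) (hα : 0 < α)
    (ψ : ℝ → ℝ)
    (hψ : ∀ p : ℝ, ψ p = p ^ ((1 + γ) / 2) * (1 - p) ^ ((1 - γ) / 2))
    (θ c : ℝ)
    (hθ : θ = (γ + 1) * B / ((γ - 1) * A + (γ + 1) * B))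
    (hc : c = (2 * B * A / α) / Real.sqrt (((γ - 1) * A) * ((γ + 1) * B)) *
       (((γ - 1) * A) / ((γ + 1) * B)) ^ (γ / 2)) :
    θ ∈ Set.Ioo (0 : ℝ) 1 ∧ c * ψ θ = (θ * A - (1 - θ) * B) / α ∧
      c * deriv ψ θ = (A + B) / α := by
  set u := (γ - 1) * A with hu'
  set v := (γ + 1) * B with hv'
  have hu : 0 < u := mul_pos (by linarith) hA
  have hv : 0 < v := mul_pos (by linarith) hB
  set S := u + v with hS'
  have hS : 0 < S := by positivity
  have hθ0 : 0 < θ := by rw [hθ]; positivity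
  have hθ1 : θ < 1 := by rw [hθ, div_lt_one hS]; linarith
  have h1θ : 1 - θ = u / S := by rw [hθ, hS']; field_simp; ring
  have h1θ0 : 0 < 1 - θ := by linarith
  -- power translations
  have hθpow : ∀ r : ℝ, θ ^ r = v ^ r / S ^ r := fun r => by
    rw [hθ, Real.div_rpow hv.le hS.le]
  have h1pow : ∀ r : ℝ, (1 - θ) ^ r = u ^ r / S ^ r := fun r => by
    rw [h1θ, Real.div_rpow hu.le hS.le]
  have hS3 : S ^ ((1 + γ) / 2) * S ^ ((1 - γ) / 2) = S := by
    rw [← Real.rpow_add hS, show (1 + γ) / 2 + (1 - γ) / 2 = 1 by ring, Real.rpow_one]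
  have hS1 : S ^ ((1 + γ) / 2 - 1) * S ^ ((1 - γ) / 2) = 1 := by
    rw [← Real.rpow_add hS, show (1 + γ) / 2 - 1 + (1 - γ) / 2 = 0 by ring, Real.rpow_zero]
  have hS2 : S ^ ((1 + γ) / 2) * S ^ ((1 - γ) / 2 - 1) = 1 := by
    rw [← Real.rpow_add hS, show (1 + γ) / 2 + ((1 - γ) / 2 - 1) = 0 by ring, Real.rpow_zero]
  have hsq : Real.sqrt (u * v) = u ^ ((1:ℝ)/2) * v ^ ((1:ℝ)/2) := by
    rw [Real.sqrt_eq_rpow, Real.mul_rpow hu.le hv.le]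
  have hdivp : (u / v) ^ (γ / 2) = u ^ (γ/2) / v ^ (γ/2) := Real.div_rpow hu.le hv.le _
  have hv1 : v ^ ((1 + γ) / 2) = v ^ ((1:ℝ)/2) * v ^ (γ/2) := by
    rw [show (1 + γ) / 2 = (1:ℝ)/2 + γ/2 by ring, Real.rpow_add hv]
  have hu1 : u ^ ((1 - γ) / 2) = u ^ ((1:ℝ)/2) / u ^ (γ/2) := by
    rw [show (1 - γ) / 2 = (1:ℝ)/2 - γ/2 by ring, Real.rpow_sub hu]
  have hv2 : v ^ ((1 + γ) / 2 - 1) = v ^ (γ/2) / v ^ ((1:ℝ)/2) := by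
    rw [show (1 + γ) / 2 - 1 = γ/2 - (1:ℝ)/2 by ring, Real.rpow_sub hv]
  have hu2 : u ^ ((1 - γ) / 2 - 1) = (u ^ ((1:ℝ)/2) * u ^ (γ/2))⁻¹ := by
    rw [show (1 - γ) / 2 - 1 = -((1:ℝ)/2 + γ/2) by ring, Real.rpow_neg hu.le,
      Real.rpow_add hu]
  have hau : u ^ ((1:ℝ)/2) * u ^ ((1:ℝ)/2) = u := by
    rw [← Real.rpow_add hu]; norm_num
  have hbv : v ^ ((1:ℝ)/2) * v ^ ((1:ℝ)/2) = v := by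
    rw [← Real.rpow_add hv]; norm_num
  have ha0 : u ^ ((1:ℝ)/2) ≠ 0 := (Real.rpow_pos_of_pos hu _).ne'
  have hb0 : v ^ ((1:ℝ)/2) ≠ 0 := (Real.rpow_pos_of_pos hv _).ne'
  have hp0 : u ^ (γ/2) ≠ 0 := (Real.rpow_pos_of_pos hu _).ne'
  have hq0 : v ^ (γ/2) ≠ 0 := (Real.rpow_pos_of_pos hv _).ne'
  -- value of ψ at θ
  have hψval : ψ θ = v ^ ((1 + γ) / 2) * u ^ ((1 - γ) / 2) / S := by
    rw [hψ, hθpow, h1pow, div_mul_div_comm, hS3]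
  -- derivative
  have dsub : HasDerivAt (fun x : ℝ => 1 - x) (-1 : ℝ) θ := by
    simpa using (hasDerivAt_id θ).const_sub 1
  have d1 : HasDerivAt (fun x : ℝ => x ^ ((1 + γ) / 2))
      ((1 + γ) / 2 * θ ^ ((1 + γ) / 2 - 1)) θ :=
    Real.hasDerivAt_rpow_const (Or.inl hθ0.ne')
  have d2 : HasDerivAt (fun x : ℝ => (1 - x) ^ ((1 - γ) / 2))
      ((1 - γ) / 2 * (1 - θ) ^ ((1 - γ) / 2 - 1) * (-1)) θ := by
    have := (Real.hasDerivAt_rpow_const (x := 1 - θ) (p := (1 - γ) / 2)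
      (Or.inl h1θ0.ne')).comp θ dsub
    exact this
  have dψ : HasDerivAt ψ ((1 + γ) / 2 * θ ^ ((1 + γ) / 2 - 1) * (1 - θ) ^ ((1 - γ) / 2)
      + θ ^ ((1 + γ) / 2) * ((1 - γ) / 2 * (1 - θ) ^ ((1 - γ) / 2 - 1) * (-1))) θ := by
    have hfun : ψ = fun x : ℝ => x ^ ((1 + γ) / 2) * (1 - x) ^ ((1 - γ) / 2) := funext hψ
    rw [hfun]; exact d1.mul d2
  have hderiv := dψ.deriv
  have key1 : v ^ ((1 + γ) / 2 - 1) / S ^ ((1 + γ) / 2 - 1) *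
      (u ^ ((1 - γ) / 2) / S ^ ((1 - γ) / 2)) = v ^ ((1 + γ) / 2 - 1) * u ^ ((1 - γ) / 2) := by
    rw [div_mul_div_comm, hS1, div_one]
  have key2 : v ^ ((1 + γ) / 2) / S ^ ((1 + γ) / 2) *
      (u ^ ((1 - γ) / 2 - 1) / S ^ ((1 - γ) / 2 - 1)) = v ^ ((1 + γ) / 2) * u ^ ((1 - γ) / 2 - 1) := by
    rw [div_mul_div_comm, hS2, div_one]
  have hder : deriv ψ θ = (1 + γ) / 2 * (v ^ ((1 + γ) / 2 - 1) * u ^ ((1 - γ) / 2))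
      - (1 - γ) / 2 * (v ^ ((1 + γ) / 2) * u ^ ((1 - γ) / 2 - 1)) := by
    rw [hderiv, hθpow, hθpow, h1pow, h1pow, ← key1, ← key2]; ring
  refine ⟨Set.mem_Ioo.mpr ⟨hθ0, hθ1⟩, ?_, ?_⟩
  · have hvm : c * ψ θ = 2 * B * A / α / S := by
      rw [hψval, hc, hsq, hdivp, hv1, hu1]
      field_simp
    rw [hvm, h1θ, hθ, hS', hu', hv']
    have hD0 : (γ - 1) * A + ((γ + 1) * B) ≠ 0 := by positivity
    field_simp
    ring
  · have hfin : c * deriv ψ θ =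
        2 * B * A / α * ((1 + γ) / 2) / (v ^ ((1:ℝ)/2) * v ^ ((1:ℝ)/2))
        - 2 * B * A / α * ((1 - γ) / 2) / (u ^ ((1:ℝ)/2) * u ^ ((1:ℝ)/2)) := by
      rw [hder, hc, hsq, hdivp, hv1, hu1, hv2, hu2]
      field_simp
    rw [hfin, hau, hbv, hu', hv']
    have h1 : γ - 1 ≠ 0 := by linarith
    have h2 : γ + 1 ≠ 0 := by linarith
    field_simp
    ring
open Real

theorem stmt_11 (h ℓ σ α γ hd ld k : ℝ) (hh : 0 < h) (hℓ : ℓ < 0) (hσ : 0 < σ) (hα : 0 < α)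
    (hγ : γ = Real.sqrt (1 + 8 * α * σ ^ 2 / (h - ℓ) ^ 2))
    (hld : ld < k * α) (hhd : k * α < hd)
    (ψ : ℝ → ℝ)
    (hψ : ∀ p : ℝ, ψ p = p ^ ((1 + γ) / 2) * (1 - p) ^ ((1 - γ) / 2))
    (θ c : ℝ)
    (hθ : θ = -(γ + 1) * (ld - k * α) /
      ((γ - 1) * (hd - k * α) - (γ + 1) * (ld - k * α)))
    (hc : c = (-2 * (ld - k * α) * (hd - k * α) / α) /
        Real.sqrt ((γ ^ 2 - 1) * (hd - k * α) * (k * α - ld)) *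
      (((γ - 1) / (γ + 1)) * ((hd - k * α) / (k * α - ld))) ^ (γ / 2)) :
    θ ∈ Set.Ioo (0 : ℝ) 1 ∧
    c * ψ θ = (θ * hd + (1 - θ) * ld) / α - k ∧
    c * deriv ψ θ = (hd - ld) / α := by
  have hγ1 : 1 < γ := by
    have hhl : (0:ℝ) < (h - ℓ) ^ 2 := pow_pos (by linarith) 2
    have hpos : 0 < 8 * α * σ ^ 2 / (h - ℓ) ^ 2 := div_pos (by positivity) hhl
    have : Real.sqrt 1 < Real.sqrt (1 + 8 * α * σ ^ 2 / (h - ℓ) ^ 2) :=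
      Real.sqrt_lt_sqrt (by norm_num) (by linarith)
    rw [hγ]; simpa using this
  set A := hd - k * α with hA'
  set B := k * α - ld with hB'
  have hA : 0 < A := by rw [hA']; linarith
  have hB : 0 < B := by rw [hB']; linarith
  have hθ2 : θ = (γ + 1) * B / ((γ - 1) * A + (γ + 1) * B) := by
    rw [hθ, hA', hB']; ring_nf
  have hc2 : c = (2 * B * A / α) / Real.sqrt (((γ - 1) * A) * ((γ + 1) * B)) *
      (((γ - 1) * A) / ((γ + 1) * B)) ^ (γ / 2) := by
    rw [hc]
    have e1 : (γ ^ 2 - 1) * A * B = ((γ - 1) * A) * ((γ + 1) * B) := by ring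
    have e2 : ((γ - 1) / (γ + 1)) * (A / B) = ((γ - 1) * A) / ((γ + 1) * B) := by
      rw [div_mul_div_comm]
    have e3 : -2 * (ld - k * α) * (hd - k * α) / α = 2 * B * A / α := by
      rw [hB', hA']; ring
    rw [e1, e2, e3]
  obtain ⟨g1, g2, g3⟩ := core_lemma γ A B α hγ1 hA hB hα ψ hψ θ c hθ2 hc2
  refine ⟨g1, ?_, ?_⟩
  · rw [g2, hA', hB']; field_simp; ring
  · rw [g3, hA', hB']; ring_nf
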